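/- Let λ > 0, let f : ℝ → ℝ be twice continuously differentiable in a neighborhood of a point t, and assume f(t) ≠ 0. Then the limit as Δ → 0⁺ of [e^{−λΔ}(2f(t) − f(t−Δ) − f(t+Δ)) + (1 − e^{−λΔ})² f(t)] / [(1 − e^{−2λΔ}) Δ f(t)] equals −(f''(t) − λ² f(t)) / (2λ f(t)). -/

import Mathlib

open Filter

private lemma neg_tendsto_Iio : Tendsto (fun Δ : ℝ => -Δ) (nhdsWithin 0 (Set.Ioi 0))
    (nhdsWithin 0 (Set.Iio 0)) := by
  apply tendsto_nhdsWithin_of_tendsto_nhds_of_eventually_within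
  · simpa using (continuous_neg.tendsto (0:ℝ)).mono_left nhdsWithin_le_nhds
  · filter_upwards [self_mem_nhdsWithin] with x hx
    simpa using hx

private lemma second_diff_limit (f : ℝ → ℝ) (t : ℝ) (hf : ContDiffAt ℝ 2 f t) :
    Tendsto (fun Δ : ℝ => (2 * f t - f (t - Δ) - f (t + Δ)) / Δ ^ 2)
      (nhdsWithin 0 (Set.Ioi 0)) (nhds (-(deriv (deriv f) t))) := by
  have hDf : ∀ᶠ y in nhds t, DifferentiableAt ℝ f y := by
    filter_upwards [hf.eventually (by norm_num)] with y hy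
    exact hy.differentiableAt (by norm_num)
  have hg0 : ContDiffAt ℝ 1 (deriv f) t := by
    have h := hf.fderiv_right (m := 1) le_rfl
    have happ : ContDiffAt ℝ 1 (fun x => fderiv ℝ f x 1) t :=
      (ContinuousLinearMap.apply ℝ ℝ (1:ℝ)).contDiff.contDiffAt.comp t h
    exact happ
  have hc : HasDerivAt (deriv f) (deriv (deriv f) t) t :=
    ((hg0.differentiableAt (by norm_num)).hasDerivAt)
  set c := deriv (deriv f) t with hcdef
  -- slope limits for deriv f
  have h1 : Tendsto (fun Δ : ℝ => Δ⁻¹ * (deriv f (t + Δ) - deriv f t))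
      (nhdsWithin 0 (Set.Ioi 0)) (nhds c) := hc.tendsto_slope_zero_right
  have h2 : Tendsto (fun Δ : ℝ => (-Δ)⁻¹ * (deriv f (t + -Δ) - deriv f t))
      (nhdsWithin 0 (Set.Ioi 0)) (nhds c) :=
    hc.tendsto_slope_zero_left.comp neg_tendsto_Iio
  have hdiv : Tendsto (fun Δ : ℝ => (deriv f (t - Δ) - deriv f (t + Δ)) / (2 * Δ))
      (nhdsWithin 0 (Set.Ioi 0)) (nhds (-c)) := by
    have hsum := (h1.add h2).const_mul (-(1/2) : ℝ)
    have hval : (-(1/2) : ℝ) * (c + c) = -c := by ring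
    rw [hval] at hsum
    refine hsum.congr' ?_
    filter_upwards [self_mem_nhdsWithin] with Δ hΔ
    have hΔ0 : (Δ:ℝ) ≠ 0 := ne_of_gt hΔ
    rw [show t + -Δ = t - Δ by ring]
    field_simp
    ring
  -- eventual differentiability
  have hplus : ∀ᶠ Δ in nhdsWithin (0:ℝ) (Set.Ioi 0), DifferentiableAt ℝ f (t + Δ) := by
    have : Tendsto (fun Δ : ℝ => t + Δ) (nhdsWithin 0 (Set.Ioi 0)) (nhds t) := by
      simpa using ((continuous_add_left t).tendsto (0:ℝ)).mono_left
        nhdsWithin_le_nhds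
    exact this.eventually hDf
  have hminus : ∀ᶠ Δ in nhdsWithin (0:ℝ) (Set.Ioi 0), DifferentiableAt ℝ f (t - Δ) := by
    have : Tendsto (fun Δ : ℝ => t - Δ) (nhdsWithin 0 (Set.Ioi 0)) (nhds t) := by
      simpa using ((continuous_sub_left t).tendsto (0:ℝ)).mono_left
        nhdsWithin_le_nhds
    exact this.eventually hDf
  -- L'Hopital
  apply HasDerivAt.lhopital_zero_nhdsGT
    (f' := fun Δ : ℝ => deriv f (t - Δ) - deriv f (t + Δ)) (g' := fun Δ : ℝ => 2 * Δ)
  · filter_upwards [hplus, hminus] with Δ h₁ h₂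
    have hm : HasDerivAt (fun Δ : ℝ => f (t - Δ)) (-(deriv f (t - Δ))) Δ := by
      have := h₂.hasDerivAt.comp Δ ((hasDerivAt_id Δ).const_sub t)
      simpa [Function.comp_def] using this
    have hp : HasDerivAt (fun Δ : ℝ => f (t + Δ)) (deriv f (t + Δ)) Δ := by
      have := h₁.hasDerivAt.comp Δ ((hasDerivAt_id Δ).const_add t)
      simpa [Function.comp_def] using this
    have := ((hasDerivAt_const Δ (2 * f t)).sub hm).sub hp
    convert this using 1
    · rfl
    · rfl
    · rfl
    · ring
  · filter_upwards with Δ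
    simpa using hasDerivAt_pow 2 Δ
  · filter_upwards [self_mem_nhdsWithin] with Δ hΔ
    have : (Δ:ℝ) ≠ 0 := ne_of_gt hΔ
    positivity
  · have hcont : ContinuousAt f t := hf.continuousAt
    have : Tendsto (fun Δ : ℝ => 2 * f t - f (t - Δ) - f (t + Δ)) (nhds 0) (nhds 0) := by
      have hm : Tendsto (fun Δ : ℝ => f (t - Δ)) (nhds 0) (nhds (f t)) := by
        apply hcont.tendsto.comp
        simpa using (continuous_sub_left t).tendsto (0:ℝ)
      have hp : Tendsto (fun Δ : ℝ => f (t + Δ)) (nhds 0) (nhds (f t)) := by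
        apply hcont.tendsto.comp
        simpa using (continuous_add_left t).tendsto (0:ℝ)
      have key := ((tendsto_const_nhds (x := 2 * f t)).sub hm).sub hp
      rw [show 2 * f t - f t - f t = 0 by ring] at key
      exact key
    exact this.mono_left nhdsWithin_le_nhds
  · have : Tendsto (fun Δ : ℝ => Δ ^ 2) (nhds (0:ℝ)) (nhds 0) := by
      simpa using (continuous_pow 2).tendsto (0:ℝ)
    exact this.mono_left nhdsWithin_le_nhds
  · exact hdiv

private lemma exp_slope_limit (μ : ℝ) :
    Tendsto (fun Δ : ℝ => (1 - Real.exp (-μ * Δ)) / Δ) (nhdsWithin 0 (Set.Ioi 0)) (nhds μ) := by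
  have hD : HasDerivAt (fun Δ : ℝ => 1 - Real.exp (-μ * Δ)) μ 0 := by
    have h1 : HasDerivAt (fun Δ : ℝ => -μ * Δ) (-μ) 0 := by
      simpa using (hasDerivAt_id (0:ℝ)).const_mul (-μ)
    have h2 := h1.exp
    have h3 := h2.const_sub 1
    simpa using h3
  have h := hD.tendsto_slope_zero_right
  refine (Tendsto.congr' ?_ h)
  filter_upwards with Δ
  simp [smul_eq_mul, div_eq_inv_mul, Real.exp_zero]

/-- Limit of the normalized interior AR(1) optimal weight: with `a = e^{-λΔ}`,
`[a(2f(t) - f(t-Δ) - f(t+Δ)) + (1-a)² f(t)] / [(1-a²) Δ f(t)]` tends to the signed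
design density `p(t) = -(f''(t) - λ² f(t)) / (2λ f(t))` as `Δ → 0⁺`. -/
theorem ar1_interior_weight_limit (lam : ℝ) (hlam : 0 < lam)
    (f : ℝ → ℝ) (t : ℝ) (hf : ContDiffAt ℝ 2 f t) (hft : f t ≠ 0) :
    Tendsto (fun Δ : ℝ =>
        (Real.exp (-lam * Δ) * (2 * f t - f (t - Δ) - f (t + Δ))
          + (1 - Real.exp (-lam * Δ)) ^ 2 * f t)
        / ((1 - Real.exp (-2 * lam * Δ)) * Δ * f t))
      (nhdsWithin 0 (Set.Ioi 0))
      (nhds (-(deriv (deriv f) t - lam ^ 2 * f t) / (2 * lam * f t))) := by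
  set c := deriv (deriv f) t with hcdef
  have T1 : Tendsto (fun Δ : ℝ => Real.exp (-lam * Δ)) (nhdsWithin (0:ℝ) (Set.Ioi 0))
      (nhds 1) := by
    have hcont : Continuous fun Δ : ℝ => Real.exp (-lam * Δ) := by fun_prop
    have : Tendsto (fun Δ : ℝ => Real.exp (-lam * Δ)) (nhds 0) (nhds 1) := by
      simpa using hcont.tendsto (0:ℝ)
    exact this.mono_left nhdsWithin_le_nhds
  have T2 := second_diff_limit f t hf
  have T3 := exp_slope_limit lam
  have T4 : Tendsto (fun Δ : ℝ => (1 - Real.exp (-2 * lam * Δ)) / Δ)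
      (nhdsWithin 0 (Set.Ioi 0)) (nhds (2 * lam)) := by
    have := exp_slope_limit (2 * lam)
    refine this.congr fun Δ => ?_
    ring_nf
  have hden : 2 * lam * f t ≠ 0 := by
    apply mul_ne_zero (by positivity) hft
  have main := ((T1.mul T2).add ((T3.mul T3).mul_const (f t))).div (T4.mul_const (f t)) hden
  have hval : (1 * -c + lam * lam * (f t)) / (2 * lam * (f t))
      = -(c - lam ^ 2 * f t) / (2 * lam * f t) := by ring_nf
  rw [hval] at main
  refine main.congr' ?_
  filter_upwards [self_mem_nhdsWithin] with Δ hΔ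
  have hΔ0 : (Δ:ℝ) ≠ 0 := ne_of_gt hΔ
  have hnum : Real.exp (-lam * Δ) * ((2 * f t - f (t - Δ) - f (t + Δ)) / Δ ^ 2)
      + (1 - Real.exp (-lam * Δ)) / Δ * ((1 - Real.exp (-lam * Δ)) / Δ) * f t
      = (Real.exp (-lam * Δ) * (2 * f t - f (t - Δ) - f (t + Δ))
          + (1 - Real.exp (-lam * Δ)) ^ 2 * f t) / Δ ^ 2 := by
    field_simp
  have hden2 : (1 - Real.exp (-2 * lam * Δ)) / Δ * f t
      = ((1 - Real.exp (-2 * lam * Δ)) * Δ * f t) / Δ ^ 2 := by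
    field_simp
  simp only [Pi.div_apply]
  rw [hnum, hden2, div_div_div_cancel_right₀ (by positivity : (Δ:ℝ)^2 ≠ 0)]
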